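/- In the Laurent polynomial ring ℤ[a, a⁻¹], there is no integer k and no sign ε ∈ {1, −1} such that 4(a + 1) = ε·a^k·4(a − 1). In other words, the Laurent polynomials 4(a+1) and 4(a−1) are not equal up to multiplication by a unit ±a^k. -/

import Mathlib

noncomputable def evalOne : LaurentPolynomial ℤ →ₐ[ℤ] ℤ :=
  AddMonoidAlgebra.lift ℤ ℤ ℤ 1

lemma evalOne_T (n : ℤ) : evalOne (LaurentPolynomial.T n) = 1 := by
  rw [evalOne, LaurentPolynomial.T]
  erw [AddMonoidAlgebra.lift_single]
  simp

lemma evalOne_C (c : ℤ) : evalOne (LaurentPolynomial.C c) = c := by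
  rw [evalOne, show (LaurentPolynomial.C c : LaurentPolynomial ℤ) = AddMonoidAlgebra.single 0 c from rfl]
  erw [AddMonoidAlgebra.lift_single]
  simp

/-- In `ℤ[a, a⁻¹]`, the Laurent polynomials `4(a+1)` and `4(a−1)` are not equal
up to multiplication by a unit `±aᵏ`. -/
theorem taut_polynomials_distinct :
    ¬ ∃ (k : ℤ) (ε : ℤ), (ε = 1 ∨ ε = -1) ∧
      (4 * (LaurentPolynomial.T 1 + 1) : LaurentPolynomial ℤ) =
        LaurentPolynomial.C ε * LaurentPolynomial.T k *
          (4 * (LaurentPolynomial.T 1 - 1)) := by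
  rintro ⟨k, ε, -, h⟩
  have := congrArg evalOne h
  simp [evalOne_T, evalOne_C, map_ofNat] at this
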